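/- If the canonical triangle functor Φ : K^b(𝒜)/K^b(𝒳) → K^b(𝒜/[𝒳]) is full, then Φ is essentially surjective (dense). -/

import Mathlib

open CategoryTheory Limits ZeroObject Pretriangulated

set_option linter.unusedSectionVars false

universe v u

variable (A : Type u) [Category.{v} A] [Preadditive A] [HasZeroObject A]
  [HasBinaryBiproducts A]

/-- A cochain complex is bounded if its terms vanish outside a finite range of degrees. -/
def IsBddComplex {C : Type*} [Category C] [Preadditive C] (K : CochainComplex C ℤ) : Prop :=
  ∃ a b : ℤ, ∀ i : ℤ, (i < a ∨ b < i) → Limits.IsZero (K.X i)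

/-- The (unbounded) homotopy category `K(𝒜)`. -/
abbrev HtpyCat := HomotopyCategory A (ComplexShape.up ℤ)

/-- The bounded homotopy category `K^b(𝒜)`, the full subcategory of `K(𝒜)` whose objects
are the bounded complexes. -/
abbrev Kb := ObjectProperty.FullSubcategory (fun K : HtpyCat A => IsBddComplex K.as)

/-- The inclusion `K^b(𝒜) ⥤ K(𝒜)`. -/
abbrev KbInc : Kb A ⥤ HtpyCat A := ObjectProperty.ι _

variable (𝒳 : A → Prop)

/-- An object of `K(𝒜)` belongs to (the isomorphism closure of) `K^b(𝒳)`: it is isomorphic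
to a bounded complex all of whose terms lie in `𝒳`. -/
def InKbX (K : HtpyCat A) : Prop :=
  ∃ L : CochainComplex A ℤ, IsBddComplex L ∧ (∀ i : ℤ, 𝒳 (L.X i)) ∧
    Nonempty ((HomotopyCategory.quotient A (ComplexShape.up ℤ)).obj L ≅ K)

/-- The class of morphisms of `K^b(𝒜)` fitting in a distinguished triangle whose cone
belongs to `K^b(𝒳)`. The Verdier quotient `K^b(𝒜)/K^b(𝒳)` is by definition the
localization of `K^b(𝒜)` with respect to this class. -/
def WX : MorphismProperty (Kb A) := fun K L f =>
  ∃ (Z : HtpyCat A) (g : (KbInc A).obj L ⟶ Z) (h : Z ⟶ ((KbInc A).obj K)⟦(1 : ℤ)⟧),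
    (Triangle.mk ((KbInc A).map f) g h ∈ distTriang (HtpyCat A)) ∧ InKbX A 𝒳 Z

/-- The Verdier quotient `K^b(𝒜)/K^b(𝒳)`. -/
abbrev VerdierQuot := (WX A 𝒳).Localization

/-- The Verdier quotient functor `K^b(𝒜) ⥤ K^b(𝒜)/K^b(𝒳)`. -/
abbrev VQ : Kb A ⥤ VerdierQuot A 𝒳 := (WX A 𝒳).Q

/-- The object of `K^b(𝒜)` given by the stalk complex concentrated in degree `n`. -/
noncomputable def stalkKb (n : ℤ) (a : A) : Kb A :=
  ⟨(HomotopyCategory.quotient A (ComplexShape.up ℤ)).obj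
      ((HomologicalComplex.single A (ComplexShape.up ℤ) n).obj a),
    ⟨n, n, fun i hi => HomologicalComplex.isZero_single_obj_X
      (ComplexShape.up ℤ) n a i (by omega)⟩⟩

/-- `f` factors through an object of `𝒳`. -/
abbrev FactorsThruX {a b : A} (f : a ⟶ b) : Prop :=
  ∃ (T : A) (_ : 𝒳 T) (u : a ⟶ T) (v : T ⟶ b), u ≫ v = f

/-- `𝒳` is a full additive subcategory: it is nonempty (hence contains a zero object up to
closure) and closed under finite direct sums. -/
class IsAdditiveSubcat : Prop where
  nonempty : ∃ T, 𝒳 T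
  biprod_mem : ∀ ⦃T T' : A⦄, 𝒳 T → 𝒳 T' → 𝒳 (T ⊞ T')

variable {A 𝒳} in
theorem FactorsThruX.add [IsAdditiveSubcat A 𝒳] {a b : A} {f g : a ⟶ b}
    (hf : FactorsThruX A 𝒳 f) (hg : FactorsThruX A 𝒳 g) : FactorsThruX A 𝒳 (f + g) := by
  obtain ⟨T, hT, u, v, rfl⟩ := hf
  obtain ⟨T', hT', u', v', rfl⟩ := hg
  exact ⟨T ⊞ T', IsAdditiveSubcat.biprod_mem hT hT', biprod.lift u u',
    biprod.desc v v', by simp⟩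

/-- The ideal relation on `𝒜` defined by `𝒳` : `f ≈ g` iff `f - g` factors through an
object of `𝒳`. -/
abbrev stabRel : HomRel A := fun {_ _} f g => FactorsThruX A 𝒳 (f - g)

instance [IsAdditiveSubcat A 𝒳] : Congruence (stabRel A 𝒳) where
  equivalence := by
    intro X Y
    constructor
    · intro f
      obtain ⟨T, hT⟩ := IsAdditiveSubcat.nonempty (A := A) (𝒳 := 𝒳)
      exact ⟨T, hT, 0, 0, by simp⟩
    · intro f g h
      obtain ⟨T, hT, u, v, huv⟩ := h
      exact ⟨T, hT, -u, v, by rw [Preadditive.neg_comp, huv, neg_sub]⟩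
    · intro f g h h₁ h₂
      have h₃ := FactorsThruX.add h₁ h₂
      simpa using h₃
  comp_left := by
    intro X Y Z f g g' h
    obtain ⟨T, hT, u, v, huv⟩ := h
    exact ⟨T, hT, f ≫ u, v, by rw [Category.assoc, huv, Preadditive.comp_sub]⟩
  comp_right := by
    intro X Y Z f f' g h
    obtain ⟨T, hT, u, v, huv⟩ := h
    exact ⟨T, hT, u, v ≫ g, by rw [← Category.assoc, huv, Preadditive.sub_comp]⟩

theorem stabRel_add [IsAdditiveSubcat A 𝒳] :
    ∀ ⦃X Y : A⦄ (f₁ f₂ g₁ g₂ : X ⟶ Y) (_ : stabRel A 𝒳 f₁ f₂) (_ : stabRel A 𝒳 g₁ g₂),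
      stabRel A 𝒳 (f₁ + g₁) (f₂ + g₂) := by
  intro X Y f₁ f₂ g₁ g₂ h₁ h₂
  have := FactorsThruX.add h₁ h₂
  simpa [stabRel, add_sub_add_comm] using this

/-- The factor category `𝒜/[𝒳]`. -/
abbrev StabCat := CategoryTheory.Quotient (stabRel A 𝒳)

noncomputable instance [IsAdditiveSubcat A 𝒳] : Preadditive (StabCat A 𝒳) :=
  CategoryTheory.Quotient.preadditive (stabRel A 𝒳) (stabRel_add A 𝒳)

/-- The projection functor `𝒜 ⥤ 𝒜/[𝒳]`. -/
abbrev stabFunctor : A ⥤ StabCat A 𝒳 := CategoryTheory.Quotient.functor _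

instance [IsAdditiveSubcat A 𝒳] : (stabFunctor A 𝒳).Additive :=
  CategoryTheory.Quotient.functor_additive (stabRel A 𝒳) (stabRel_add A 𝒳)

/-- The homotopy category `K(𝒜/[𝒳])`. -/
abbrev HtpyStab [IsAdditiveSubcat A 𝒳] :=
  HomotopyCategory (StabCat A 𝒳) (ComplexShape.up ℤ)

/-- The bounded homotopy category `K^b(𝒜/[𝒳])`. -/
abbrev KbStab [IsAdditiveSubcat A 𝒳] :=
  ObjectProperty.FullSubcategory (fun K : HtpyStab A 𝒳 => IsBddComplex K.as)

/-- The canonical functor `K^b(𝒜) ⥤ K^b(𝒜/[𝒳])` sending a bounded complex over `𝒜` to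
the same complex with entries viewed in `𝒜/[𝒳]`. -/
noncomputable def canKbStab [IsAdditiveSubcat A 𝒳] : Kb A ⥤ KbStab A 𝒳 :=
  ObjectProperty.lift _
    (KbInc A ⋙ (stabFunctor A 𝒳).mapHomotopyCategory (ComplexShape.up ℤ))
    (fun K => by
      obtain ⟨a, b, h⟩ := K.property
      exact ⟨a, b, fun i hi => (stabFunctor A 𝒳).map_isZero (h i hi)⟩)


namespace Prop41

open CategoryTheory CategoryTheory.Limits CochainComplex HomologicalComplex

section Generic

variable {C : Type*} [Category C] [Preadditive C] [HasZeroObject C] [HasBinaryBiproducts C]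

lemma isZero_biprod {X Y : C} (hX : IsZero X) (hY : IsZero Y) : IsZero (X ⊞ Y) := by
  rw [IsZero.iff_id_eq_zero]
  apply biprod.hom_ext
  · exact hX.eq_of_tgt _ _
  · exact hY.eq_of_tgt _ _

lemma isIso_of_isZero {X Y : C} (f : X ⟶ Y) (hX : IsZero X) (hY : IsZero Y) : IsIso f :=
  ⟨0, hX.eq_of_src _ _, hY.eq_of_src _ _⟩

lemma isZero_complex_of {K : CochainComplex C ℤ} (h : ∀ i, IsZero (K.X i)) : IsZero K := by
  rw [IsZero.iff_id_eq_zero]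
  ext i
  exact (h i).eq_of_src _ _

section MC

variable {F G : CochainComplex C ℤ} (φ : F ⟶ G)

lemma mappingCone_X_eq (i j : ℤ) (hij : i + 1 = j) :
    (mappingCone φ).X i = (F.X j ⊞ G.X i : C) := by
  have hrel : (ComplexShape.up ℤ).Rel i j := by simpa using hij
  have hnext : (ComplexShape.up ℤ).next i = j := ComplexShape.next_eq' _ hrel
  subst hnext
  show HomologicalComplex.homotopyCofiber.X φ i = _
  rw [HomologicalComplex.homotopyCofiber.X, dif_pos hrel]

lemma mappingCone_X_isZero (i j : ℤ) (hij : i + 1 = j) (hF : IsZero (F.X j))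
    (hG : IsZero (G.X i)) : IsZero ((mappingCone φ).X i) := by
  rw [mappingCone_X_eq φ i j hij]
  exact isZero_biprod hF hG

lemma isBdd_mappingCone (hF : IsBddComplex F) (hG : IsBddComplex G) :
    IsBddComplex (mappingCone φ) := by
  obtain ⟨a₁, b₁, h₁⟩ := hF; obtain ⟨a₂, b₂, h₂⟩ := hG
  exact ⟨min a₁ a₂ - 1, max b₁ b₂, fun i hi =>
    mappingCone_X_isZero φ i (i+1) rfl (h₁ _ (by omega)) (h₂ _ (by omega))⟩

end MC

lemma isBdd_shift {K : CochainComplex C ℤ} (h : IsBddComplex K) (n : ℤ) :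
    IsBddComplex (K⟦n⟧) := by
  obtain ⟨a, b, hK⟩ := h
  exact ⟨a - n, b - n, fun i hi =>
    IsZero.of_iso (hK (i+n) (by omega)) (shiftFunctorObjXIso K n i (i+n) rfl)⟩

lemma isBdd_single (n : ℤ) (x : C) :
    IsBddComplex ((HomologicalComplex.single C (ComplexShape.up ℤ) n).obj x) :=
  ⟨n, n, fun i hi => HomologicalComplex.isZero_single_obj_X _ n x i (by omega)⟩

/-- The complex supported entirely in one degree is isomorphic to a single complex. -/
noncomputable def singleIsoOfSupported (n : ℤ) (M : CochainComplex C ℤ)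
    (hM : ∀ i, i ≠ n → IsZero (M.X i)) :
    M ≅ (HomologicalComplex.single C (ComplexShape.up ℤ) n).obj (M.X n) :=
  HomologicalComplex.Hom.isoOfComponents
    (fun i => if h : i = n then
        M.XIsoOfEq h ≪≫ (HomologicalComplex.singleObjXIsoOfEq (ComplexShape.up ℤ) n (M.X n) i h).symm
      else (hM i h).iso (HomologicalComplex.isZero_single_obj_X (ComplexShape.up ℤ) n (M.X n) i h))
    (by
      intro i j hij
      by_cases hj : j = n
      · subst hj
        have hi : i ≠ j := by change i + 1 = j at hij; omega
        exact (hM i hi).eq_of_src _ _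
      · apply ((HomologicalComplex.isZero_single_obj_X (ComplexShape.up ℤ) n (M.X n) j hj)).eq_of_tgt)

/-- Brutal truncation keeping degrees `≥ c`. -/
noncomputable abbrev truncGE (c : ℤ) (M : CochainComplex C ℤ) : CochainComplex C ℤ where
  X i := if c ≤ i then M.X i else 0
  d i j :=
    if h : c ≤ i ∧ c ≤ j then
      eqToHom (if_pos h.1) ≫ M.d i j ≫ eqToHom (if_pos h.2).symm
    else 0
  shape i j hij := by
    by_cases h : c ≤ i ∧ c ≤ j
    · rw [dif_pos h, M.shape i j hij]; simp
    · rw [dif_neg h]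
  d_comp_d' i j k hij hjk := by
    by_cases h : c ≤ i ∧ c ≤ j
    · by_cases h' : c ≤ j ∧ c ≤ k
      · rw [dif_pos h, dif_pos h']; simp
      · rw [dif_neg h', comp_zero]
    · rw [dif_neg h, zero_comp]

lemma truncGE_X_eq_of_le (c : ℤ) (M : CochainComplex C ℤ) {i : ℤ} (h : c ≤ i) :
    (truncGE c M).X i = M.X i := if_pos h

lemma truncGE_X_isZero_of_lt (c : ℤ) (M : CochainComplex C ℤ) {i : ℤ} (h : i < c) :
    IsZero ((truncGE c M).X i) := by
  have : (truncGE c M).X i = 0 := if_neg (by omega)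
  rw [this]
  exact isZero_zero C

lemma truncGE_X_isZero (c : ℤ) (M : CochainComplex C ℤ) {i : ℤ} (hi : IsZero (M.X i)) :
    IsZero ((truncGE c M).X i) := by
  by_cases h : c ≤ i
  · rw [show (truncGE c M).X i = M.X i from if_pos h]; exact hi
  · exact truncGE_X_isZero_of_lt c M (by omega)

/-- The inclusion of the brutal truncation. -/
noncomputable def truncGEι (c : ℤ) (M : CochainComplex C ℤ) : truncGE c M ⟶ M where
  f i := if h : c ≤ i then eqToHom (if_pos h) else 0
  comm' i j hij := by
    change i + 1 = j at hij
    dsimp [truncGE]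
    by_cases hi : c ≤ i
    · have hj : c ≤ j := by omega
      rw [dif_pos hi, dif_pos hj, dif_pos ⟨hi, hj⟩]
      simp
    · rw [dif_neg hi, zero_comp, dif_neg (by tauto), zero_comp]


section Decomp

open CochainComplex.HomComplex

variable (a : ℤ) (M : CochainComplex C ℤ)

/-- The map from the single complex in degree `a+1` with value `M.X a` into the
brutal truncation, given by the differential of `M`. -/
noncomputable def truncSingleHom :
    (HomologicalComplex.single C (ComplexShape.up ℤ) (a+1)).obj (M.X a) ⟶ truncGE (a+1) M :=
  HomologicalComplex.mkHomFromSingle (M.d a (a+1) ≫ eqToHom (if_pos (le_refl (a+1))).symm)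
    (fun k hk => by
      dsimp [truncGE]
      by_cases h : a + 1 ≤ a + 1 ∧ a + 1 ≤ k
      · rw [dif_pos h]
        simp
      · rw [dif_neg h, comp_zero])

/-- The `(-1)`-cochain used to construct the comparison map from the mapping cone of
`truncSingleHom` to `M`. -/
noncomputable def truncSingleCochain :
    Cochain ((HomologicalComplex.single C (ComplexShape.up ℤ) (a+1)).obj (M.X a)) M (-1) :=
  Cochain.mk (fun p q _ =>
    if hp : p = a + 1 then
      (HomologicalComplex.singleObjXIsoOfEq (ComplexShape.up ℤ) (a+1) (M.X a) p hp).hom ≫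
        eqToHom (congrArg M.X (by omega : a = q))
    else 0)

lemma truncSingle_δ :
    δ (-1) 0 (truncSingleCochain a M) =
      Cochain.ofHom (truncSingleHom a M ≫ truncGEι (a+1) M) := by
  ext p
  by_cases hp : p = a + 1
  · subst hp
    rw [δ_v (-1) 0 (by norm_num) _ (a+1) (a+1) (add_zero _) a (a+2) (by omega) (by omega)]
    simp only [Cochain.ofHom_v, HomologicalComplex.comp_f]
    dsimp [truncSingleCochain, truncGEι, truncSingleHom, HomologicalComplex.mkHomFromSingle]
    rw [dif_pos rfl, dif_pos rfl, dif_pos (le_refl (a+1))]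
    simp [HomologicalComplex.singleObjXSelf, HomologicalComplex.singleObjXIsoOfEq]
  · exact (HomologicalComplex.isZero_single_obj_X (ComplexShape.up ℤ) (a+1) (M.X a) p hp).eq_of_src _ _

/-- The comparison map from the mapping cone of `truncSingleHom` to `M`. -/
noncomputable def truncDecompHom : mappingCone (truncSingleHom a M) ⟶ M :=
  mappingCone.desc _ (truncSingleCochain a M) (truncGEι (a+1) M) (truncSingle_δ a M)

lemma truncDecompHom_isIso (hM : ∀ i, i < a → IsZero (M.X i)) :
    IsIso (truncDecompHom a M) := by
  have : ∀ p : ℤ, IsIso ((truncDecompHom a M).f p) := by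
    intro p
    simp only [truncDecompHom]
    rcases lt_trichotomy p a with hp | rfl | hp
    · exact isIso_of_isZero _ (mappingCone_X_isZero _ p (p+1) rfl
        (HomologicalComplex.isZero_single_obj_X _ _ _ _ (by omega))
        (truncGE_X_isZero_of_lt _ _ (by omega))) (hM p hp)
    · refine ⟨⟨(HomologicalComplex.singleObjXSelf (ComplexShape.up ℤ) (p+1) (M.X p)).inv ≫
          (mappingCone.inl (truncSingleHom p M)).v (p+1) p (by omega), ?_, ?_⟩⟩
      · rw [mappingCone.ext_from_iff _ (p+1) p (by omega)]
        constructor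
        · rw [← Category.assoc, mappingCone.inl_v_desc_f]
          dsimp [truncSingleCochain]
          rw [dif_pos rfl]
          simp [HomologicalComplex.singleObjXSelf]
        · exact (truncGE_X_isZero_of_lt _ _ (by omega)).eq_of_src _ _
      · rw [Category.assoc, mappingCone.inl_v_desc_f]
        dsimp [truncSingleCochain]
        rw [dif_pos rfl]
        simp [HomologicalComplex.singleObjXSelf]
    · refine ⟨⟨eqToHom (truncGE_X_eq_of_le (a+1) M (by omega : a+1 ≤ p)).symm ≫
          (mappingCone.inr (truncSingleHom a M)).f p, ?_, ?_⟩⟩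
      · rw [mappingCone.ext_from_iff _ (p+1) p (by omega)]
        constructor
        · exact (HomologicalComplex.isZero_single_obj_X (ComplexShape.up ℤ) (a+1) (M.X a)
            (p+1) (by omega)).eq_of_src _ _
        · rw [← Category.assoc, mappingCone.inr_f_desc_f]
          dsimp [truncGEι]
          rw [dif_pos (by omega : a+1 ≤ p)]
          simp
      · rw [Category.assoc, mappingCone.inr_f_desc_f]
        dsimp [truncGEι]
        rw [dif_pos (by omega : a+1 ≤ p)]
        simp
  exact HomologicalComplex.Hom.isIso_of_components _

/-- The decomposition isomorphism: `M` is isomorphic to the mapping cone of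
`truncSingleHom a M` provided `M` vanishes in degrees `< a`. -/
noncomputable def truncDecompIso (hM : ∀ i, i < a → IsZero (M.X i)) :
    mappingCone (truncSingleHom a M) ≅ M :=
  have := truncDecompHom_isIso a M hM
  asIso (truncDecompHom a M)

end Decomp

end Generic

section Stab

variable [IsAdditiveSubcat A 𝒳]

lemma isZero_stab_obj {T : A} (hT : IsZero T) : IsZero ((stabFunctor A 𝒳).obj T) := by
  rw [IsZero.iff_id_eq_zero, ← (stabFunctor A 𝒳).map_id, hT.eq_of_src (𝟙 T) 0,
    Functor.map_zero]

instance : HasZeroObject (StabCat A 𝒳) :=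
  ⟨(stabFunctor A 𝒳).obj 0, isZero_stab_obj A 𝒳 (isZero_zero A)⟩

lemma isZero_stab_of_mem {T : A} (hT : 𝒳 T) : IsZero ((stabFunctor A 𝒳).obj T) := by
  rw [IsZero.iff_id_eq_zero, ← (stabFunctor A 𝒳).map_id]
  have h : stabRel A 𝒳 (𝟙 T) 0 := ⟨T, hT, 𝟙 T, 𝟙 T, by simp⟩
  rw [CategoryTheory.Quotient.sound _ h, Functor.map_zero]

instance : HasBinaryBiproducts (StabCat A 𝒳) := by
  constructor
  intro X Y
  exact hasBinaryBiproduct_of_total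
    ((stabFunctor A 𝒳).mapBinaryBicone (BinaryBiproduct.bicone X.as Y.as))
    (by
      dsimp [Functor.mapBinaryBicone, BinaryBicones.functoriality]
      rw [← Functor.map_comp, ← Functor.map_comp]
      exact (Functor.map_add _).symm.trans (by rw [biprod.total, CategoryTheory.Functor.map_id]))

/-- The induced functor on complexes. -/
noncomputable abbrev mapS : CochainComplex A ℤ ⥤ CochainComplex (StabCat A 𝒳) ℤ :=
  (stabFunctor A 𝒳).mapHomologicalComplex _

/-- The quotient functor to `K(𝒜/[𝒳])`. -/
noncomputable abbrev qS : CochainComplex (StabCat A 𝒳) ℤ ⥤ HtpyStab A 𝒳 :=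
  HomotopyCategory.quotient _ _

/-- The quotient functor to `K(𝒜)`. -/
abbrev qA : CochainComplex A ℤ ⥤ HtpyCat A :=
  HomotopyCategory.quotient _ _

/-- The induced functor on homotopy categories. -/
noncomputable abbrev mapH : HtpyCat A ⥤ HtpyStab A 𝒳 :=
  (stabFunctor A 𝒳).mapHomotopyCategory _

/-- The canonical functor `K^b(𝒜) ⥤ K(𝒜/[𝒳])`. -/
noncomputable abbrev canH : Kb A ⥤ HtpyStab A 𝒳 :=
  KbInc A ⋙ mapH A 𝒳

instance : (mapH A 𝒳).PreservesZeroMorphisms where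
  map_zero X Y := by
    exact Functor.map_zero _ _ _

variable {A 𝒳}

lemma InKbX.of_iso {Z Z' : HtpyCat A} (h : InKbX A 𝒳 Z) (e : Z ≅ Z') : InKbX A 𝒳 Z' := by
  obtain ⟨L, h1, h2, ⟨e'⟩⟩ := h
  exact ⟨L, h1, h2, ⟨e' ≪≫ e⟩⟩

lemma isZero_mapS_of_mem {L : CochainComplex A ℤ} (hL : ∀ i, 𝒳 (L.X i)) :
    IsZero ((qS A 𝒳).obj ((mapS A 𝒳).obj L)) :=
  (qS A 𝒳).map_isZero (Prop41.isZero_complex_of (fun i => isZero_stab_of_mem A 𝒳 (hL i)))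

lemma isZero_mapH_of_InKbX {Z : HtpyCat A} (h : InKbX A 𝒳 Z) :
    IsZero ((mapH A 𝒳).obj Z) := by
  obtain ⟨L, hb, hm, ⟨e⟩⟩ := h
  refine IsZero.of_iso ?_ ((mapH A 𝒳).mapIso e.symm)
  exact IsZero.of_iso (isZero_mapS_of_mem hm)
    (((stabFunctor A 𝒳).mapHomotopyCategoryFactors _).app L)

variable (A 𝒳)

/-- The class of morphisms of `K^b(𝒜)` whose cone is in `K^b(𝒳)` or zero. -/
def Wstar : MorphismProperty (Kb A) := fun K L s =>
  ∃ (Z : HtpyCat A) (g : (KbInc A).obj L ⟶ Z) (h : Z ⟶ ((KbInc A).obj K)⟦(1 : ℤ)⟧),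
    (Triangle.mk ((KbInc A).map s) g h ∈ distTriang (HtpyCat A)) ∧
      (InKbX A 𝒳 Z ∨ IsZero Z)

variable {A 𝒳}

lemma WX_le_Wstar {K L : Kb A} {s : K ⟶ L} (hs : WX A 𝒳 s) : Wstar A 𝒳 s := by
  obtain ⟨Z, g, h, hT, hZ⟩ := hs
  exact ⟨Z, g, h, hT, Or.inl hZ⟩

lemma Wstar_id (K : Kb A) : Wstar A 𝒳 (𝟙 K) :=
  ⟨0, 0, 0, by
      rw [CategoryTheory.Functor.map_id]
      exact contractible_distinguished ((KbInc A).obj K),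
    Or.inr (isZero_zero _)⟩

lemma Wstar.isIso_VQ {K L : Kb A} {s : K ⟶ L} (hs : Wstar A 𝒳 s) :
    IsIso ((VQ A 𝒳).map s) := by
  obtain ⟨Z, g, h, hT, hZ⟩ := hs
  rcases hZ with h1 | h1
  · exact Localization.inverts (VQ A 𝒳) (WX A 𝒳) s ⟨Z, g, h, hT, h1⟩
  · have h2 : IsIso ((KbInc A).map s) := (Triangle.isZero₃_iff_isIso₁ _ hT).1 h1
    have : IsIso s := isIso_of_reflects_iso s (KbInc A)
    infer_instance

lemma Wstar.isIso_canH {K L : Kb A} {s : K ⟶ L} (hs : Wstar A 𝒳 s) :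
    IsIso ((canH A 𝒳).map s) := by
  obtain ⟨Z, g, h, hT, hZ⟩ := hs
  have hdist := (mapH A 𝒳).map_distinguished _ hT
  have hz : IsZero ((mapH A 𝒳).obj Z) := by
    rcases hZ with h1 | h1
    · exact isZero_mapH_of_InKbX h1
    · exact (mapH A 𝒳).map_isZero h1
  exact (Triangle.isZero₃_iff_isIso₁ _ hdist).1 hz

lemma mem_mappingCone_X {K L : CochainComplex A ℤ} (φ : K ⟶ L)
    (hK : ∀ i, 𝒳 (K.X i)) (hL : ∀ i, 𝒳 (L.X i)) (i : ℤ) :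
    𝒳 ((CochainComplex.mappingCone φ).X i) := by
  rw [Prop41.mappingCone_X_eq φ i (i+1) rfl]
  exact IsAdditiveSubcat.biprod_mem (hK (i+1)) (hL i)

lemma mem_shift_X {K : CochainComplex A ℤ} (hK : ∀ i, 𝒳 (K.X i)) (n i : ℤ) :
    𝒳 ((K⟦n⟧).X i) :=
  hK (i + n)

lemma Ycl_ext {T : Triangle (HtpyCat A)} (hT : T ∈ distTriang (HtpyCat A))
    (h₁ : InKbX A 𝒳 T.obj₁ ∨ IsZero T.obj₁) (h₃ : InKbX A 𝒳 T.obj₃ ∨ IsZero T.obj₃) :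
    InKbX A 𝒳 T.obj₂ ∨ IsZero T.obj₂ := by
  rcases h₁ with h₁ | h₁
  · rcases h₃ with h₃ | h₃
    · -- main case
      obtain ⟨L₁, hb₁, hm₁, ⟨e₁⟩⟩ := h₁
      obtain ⟨L₃, hb₃, hm₃, ⟨e₃⟩⟩ := h₃
      have hT' := inv_rot_of_distTriang _ hT
      set T' := T.invRotate with hT'def
      let σ : (qA A).obj (L₃⟦(-1 : ℤ)⟧) ≅ ((qA A).obj L₃)⟦(-1 : ℤ)⟧ :=
        ((qA A).commShiftIso (-1 : ℤ)).app L₃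
      let a₁ : (qA A).obj (L₃⟦(-1 : ℤ)⟧) ≅ T'.obj₁ :=
        σ ≪≫ (CategoryTheory.shiftFunctor (HtpyCat A) (-1 : ℤ)).mapIso e₃
      let u : (qA A).obj (L₃⟦(-1 : ℤ)⟧) ⟶ (qA A).obj L₁ :=
        a₁.hom ≫ T'.mor₁ ≫ e₁.inv
      obtain ⟨u₀, hu₀⟩ := (qA A).map_surjective u
      have hTh := HomotopyCategory.mappingCone_triangleh_distinguished u₀
      obtain ⟨c, hc₁, hc₂⟩ := complete_distinguished_triangle_morphism
        (CochainComplex.mappingCone.triangleh u₀) T' hTh hT' a₁.hom e₁.hom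
        (by
          change (qA A).map u₀ ≫ e₁.hom = a₁.hom ≫ T'.mor₁
          rw [hu₀]
          dsimp [u]
          exact (Category.assoc _ _ _).trans (congrArg (a₁.hom ≫ ·) ((Category.assoc _ _ _).trans
            ((congrArg (T'.mor₁ ≫ ·) e₁.inv_hom_id).trans (Category.comp_id _)))))
      have : IsIso c := by
        refine isIso₃_of_isIso₁₂
          ({ hom₁ := a₁.hom, hom₂ := e₁.hom, hom₃ := c,
             comm₁ := by
               change (qA A).map u₀ ≫ e₁.hom = a₁.hom ≫ T'.mor₁
               rw [hu₀]
               dsimp [u]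
               exact (Category.assoc _ _ _).trans (congrArg (a₁.hom ≫ ·) ((Category.assoc _ _ _).trans
                 ((congrArg (T'.mor₁ ≫ ·) e₁.inv_hom_id).trans (Category.comp_id _))))
             comm₂ := hc₁, comm₃ := hc₂ } :
            CochainComplex.mappingCone.triangleh u₀ ⟶ T') hTh hT' ?_ ?_
        · exact a₁.isIso_hom
        · exact e₁.isIso_hom
      refine Or.inl (InKbX.of_iso ?_ (@asIso _ _ _ _ c this))
      exact ⟨CochainComplex.mappingCone u₀,
        Prop41.isBdd_mappingCone u₀ (Prop41.isBdd_shift hb₃ _) hb₁,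
        mem_mappingCone_X u₀ (mem_shift_X hm₃ _) hm₁, ⟨Iso.refl _⟩⟩
    · -- obj₃ zero : mor₁ iso
      have h2 : IsIso T.mor₁ := (Triangle.isZero₃_iff_isIso₁ _ hT).1 h₃
      exact Or.inl (InKbX.of_iso h₁ (asIso T.mor₁))
  · rcases h₃ with h₃ | h₃
    · have h2 : IsIso T.mor₂ := (Triangle.isZero₁_iff_isIso₂ _ hT).1 h₁
      exact Or.inl (InKbX.of_iso h₃ (asIso T.mor₂).symm)
    · exact Or.inr (Triangle.isZero₂_of_isZero₁₃ _ hT h₁ h₃)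

lemma Wstar.comp {K L M : Kb A} {s : K ⟶ L} {t : L ⟶ M}
    (hs : Wstar A 𝒳 s) (ht : Wstar A 𝒳 t) : Wstar A 𝒳 (s ≫ t) := by
  obtain ⟨Z₁, g₁, h₁, hT₁, hZ₁⟩ := hs
  obtain ⟨Z₂, g₂, h₂, hT₂, hZ₂⟩ := ht
  obtain ⟨Z₃, g₃, h₃, hT₃⟩ := distinguished_cocone_triangle ((KbInc A).map (s ≫ t))
  have comm : (KbInc A).map s ≫ (KbInc A).map t = (KbInc A).map (s ≫ t) :=
    ((KbInc A).map_comp s t).symm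
  have oct := Triangulated.someOctahedron comm hT₁ hT₂ hT₃
  have hY := Ycl_ext oct.mem (Or.imp id id hZ₁) (Or.imp id id hZ₂)
  exact ⟨Z₃, g₃, h₃, hT₃, hY⟩

end Stab

section Frac

variable [IsAdditiveSubcat A 𝒳]

variable {A 𝒳}

/-- The Ore condition for `Wstar`. -/
lemma ore {K₁ K₂ Y : Kb A} (f₁ : K₁ ⟶ Y) (s₂ : K₂ ⟶ Y) (hs₂ : Wstar A 𝒳 s₂) :
    ∃ (K₃ : Kb A) (s₃ : K₃ ⟶ K₁) (g : K₃ ⟶ K₂), Wstar A 𝒳 s₃ ∧ s₃ ≫ f₁ = g ≫ s₂ := by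
  obtain ⟨Z, g₂, h₂, hT₂, hZ⟩ := hs₂
  rcases hZ with hZ | hZ
  swap
  · have h1 : IsIso ((KbInc A).map s₂) := (Triangle.isZero₃_iff_isIso₁ _ hT₂).1 hZ
    have h2 : IsIso s₂ := isIso_of_reflects_iso s₂ (KbInc A)
    exact ⟨K₁, 𝟙 K₁, f₁ ≫ inv s₂, Wstar_id K₁, by simp⟩
  · obtain ⟨L, hbL, hmL, ⟨e⟩⟩ := hZ
    have hB' : Triangle.mk ((KbInc A).map s₂) (g₂ ≫ e.inv) (e.hom ≫ h₂) ∈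
        distTriang (HtpyCat A) := by
      refine isomorphic_distinguished _ hT₂ _ ?_
      exact Triangle.isoMk _ _ (Iso.refl _) (Iso.refl _) e
        ((Category.comp_id _).trans (Category.id_comp _).symm)
        ((Category.assoc _ _ _).trans ((congrArg (g₂ ≫ ·) e.inv_hom_id).trans
          ((Category.comp_id _).trans (Category.id_comp _).symm)))
        ((congrArg ((e.hom ≫ h₂) ≫ ·) (CategoryTheory.Functor.map_id _ _)).trans (Category.comp_id _))
    obtain ⟨u₀, hu₀⟩ := (qA A).map_surjective ((KbInc A).map f₁ ≫ (g₂ ≫ e.inv) :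
      (qA A).obj ((KbInc A).obj K₁).as ⟶ (qA A).obj L)
    have hTh := HomotopyCategory.mappingCone_triangleh_distinguished u₀
    have hTr := inv_rot_of_distTriang _ hTh
    have hbC : IsBddComplex ((CochainComplex.mappingCone u₀)⟦(-1 : ℤ)⟧) :=
      Prop41.isBdd_shift (Prop41.isBdd_mappingCone u₀ K₁.property hbL) _
    let K₃ : Kb A := ⟨(qA A).obj ((CochainComplex.mappingCone u₀)⟦(-1 : ℤ)⟧), hbC⟩
    let T₁ := (CochainComplex.mappingCone.triangleh u₀).invRotate
    let e₃ : (KbInc A).obj K₃ ≅ T₁.obj₁ :=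
      ((qA A).commShiftIso (-1 : ℤ)).app (CochainComplex.mappingCone u₀)
    let s₃ : K₃ ⟶ K₁ := ObjectProperty.homMk (e₃.hom ≫ T₁.mor₁ : (KbInc A).obj K₃ ⟶ T₁.obj₂)
    have hT₁ : Triangle.mk ((KbInc A).map s₃) T₁.mor₂
        (T₁.mor₃ ≫ (CategoryTheory.shiftFunctor (HtpyCat A) (1 : ℤ)).map e₃.inv) ∈
        distTriang (HtpyCat A) := by
      refine isomorphic_distinguished _ hTr _ ?_
      refine Triangle.isoMk _ _ e₃ (Iso.refl _) (Iso.refl _) ?_ ?_ ?_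
      · show ((e₃.hom ≫ T₁.mor₁) ≫ 𝟙 _) = e₃.hom ≫ T₁.mor₁
        rw [Category.comp_id]
      · show T₁.mor₂ ≫ 𝟙 _ = 𝟙 _ ≫ T₁.mor₂
        rw [Category.comp_id, Category.id_comp]
      · show (T₁.mor₃ ≫ _) ≫ _ = 𝟙 _ ≫ T₁.mor₃
        exact (Category.assoc _ _ _).trans ((congrArg (T₁.mor₃ ≫ ·) ((Functor.map_comp _ _ _).symm.trans
          ((congrArg (CategoryTheory.shiftFunctor (HtpyCat A) (1 : ℤ)).map e₃.inv_hom_id).trans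
            (CategoryTheory.Functor.map_id _ _)))).trans ((Category.comp_id _).trans (Category.id_comp _).symm))
    have hWs₃ : Wstar A 𝒳 s₃ :=
      ⟨(qA A).obj L, T₁.mor₂,
        T₁.mor₃ ≫ (CategoryTheory.shiftFunctor (HtpyCat A) (1 : ℤ)).map e₃.inv, hT₁,
        Or.inl ⟨L, hbL, hmL, ⟨Iso.refl _⟩⟩⟩
    obtain ⟨g, hg₁, _⟩ := complete_distinguished_triangle_morphism₁ _ _ hT₁ hB'
      ((KbInc A).map f₁) (𝟙 _)
      (by
        exact (Category.comp_id _).trans hu₀)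
    exact ⟨K₃, s₃, ObjectProperty.homMk g, hWs₃, ObjectProperty.hom_ext _ hg₁⟩

variable (A 𝒳)

/-- The fraction property for morphisms in the Verdier quotient. -/
def FracP : MorphismProperty (VerdierQuot A 𝒳) := fun X Y v =>
  ∃ (K' : Kb A) (s : K' ⟶ X.as.obj) (f : K' ⟶ Y.as.obj), Wstar A 𝒳 s ∧
    (VQ A 𝒳).map s ≫ v = (VQ A 𝒳).map f

instance : (FracP A 𝒳).IsStableUnderComposition := by
  constructor
  rintro X Y Z v₁ v₂ ⟨K₁, s₁, f₁, hW₁, he₁⟩ ⟨K₂, s₂, f₂, hW₂, he₂⟩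
  obtain ⟨K₃, s₃, g, hW₃, hg⟩ := ore f₁ s₂ hW₂
  refine ⟨K₃, s₃ ≫ s₁, g ≫ f₂, hW₃.comp hW₁, ?_⟩
  have h1 : (VQ A 𝒳).map s₁ ≫ v₁ ≫ v₂ = (VQ A 𝒳).map f₁ ≫ v₂ := by
    exact (Category.assoc _ _ _).symm.trans (congrArg (· ≫ v₂) he₁)
  have h2 : (VQ A 𝒳).map (s₃ ≫ f₁) = (VQ A 𝒳).map (g ≫ s₂) := by rw [hg]
  calc (VQ A 𝒳).map (s₃ ≫ s₁) ≫ v₁ ≫ v₂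
      = (VQ A 𝒳).map s₃ ≫ ((VQ A 𝒳).map s₁ ≫ v₁ ≫ v₂) := by
        rw [Functor.map_comp, Category.assoc]
    _ = (VQ A 𝒳).map s₃ ≫ (VQ A 𝒳).map f₁ ≫ v₂ := by rw [h1]
    _ = (VQ A 𝒳).map g ≫ (VQ A 𝒳).map s₂ ≫ v₂ := 
        (Category.assoc _ _ _).symm.trans ((congrArg (· ≫ v₂) ((Functor.map_comp _ _ _).symm.trans
          (h2.trans (Functor.map_comp _ _ _)))).trans (Category.assoc _ _ _))
    _ = ((VQ A 𝒳).map g ≫ (VQ A 𝒳).map f₂ : (VQ A 𝒳).obj K₃ ⟶ Z) :=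
        congrArg ((VQ A 𝒳).map g ≫ ·) he₂
    _ = (show (VQ A 𝒳).obj K₃ ⟶ Z from (VQ A 𝒳).map (g ≫ f₂)) := (Functor.map_comp _ _ _).symm

lemma fracP_top {X Y : VerdierQuot A 𝒳} (v : X ⟶ Y) : FracP A 𝒳 v := by
  have h := Localization.Construction.morphismProperty_eq_top (W := WX A 𝒳) (FracP A 𝒳)
    (fun X Y f => ⟨X, 𝟙 X, f, Wstar_id X,
      (congrArg (· ≫ _) (CategoryTheory.Functor.map_id _ _)).trans (Category.id_comp _)⟩)
    (fun X Y w hw => ⟨X, w, 𝟙 X, WX_le_Wstar hw, by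
      exact (Localization.Construction.wIso w hw).hom_inv_id.trans (CategoryTheory.Functor.map_id _ _).symm⟩)
  rw [h]
  trivial

end Frac

section Main

variable [IsAdditiveSubcat A 𝒳]
variable {A 𝒳}

lemma main_induction (Φ : VerdierQuot A 𝒳 ⥤ KbStab A 𝒳)
    (e : VQ A 𝒳 ⋙ Φ ≅ canKbStab A 𝒳) (hfull : Φ.Full) :
    ∀ (n : ℕ) (a : ℤ) (M : CochainComplex (StabCat A 𝒳) ℤ),
      (∀ i : ℤ, (i < a ∨ a + n < i) → IsZero (M.X i)) →
      ∃ K : CochainComplex A ℤ, IsBddComplex K ∧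
        Nonempty ((qS A 𝒳).obj ((mapS A 𝒳).obj K) ≅ (qS A 𝒳).obj M) := by
  intro n
  induction n with
  | zero =>
    intro a M hM
    refine ⟨(HomologicalComplex.single A (ComplexShape.up ℤ) a).obj ((M.X a).as),
      Prop41.isBdd_single _ _, ⟨(qS A 𝒳).mapIso ?_⟩⟩
    refine ?_ ≪≫ (Prop41.singleIsoOfSupported a M (fun i hi => hM i (by omega))).symm
    exact ((HomologicalComplex.singleMapHomologicalComplex (stabFunctor A 𝒳)
      (ComplexShape.up ℤ) a).app ((M.X a).as))
  | succ n ih =>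
    intro a M hM
    obtain ⟨Kτ, hbKτ, ⟨ρ⟩⟩ := ih (a+1) (Prop41.truncGE (a+1) M) (fun i hi => by
      rcases hi with hi | hi
      · exact Prop41.truncGE_X_isZero_of_lt _ _ hi
      · exact Prop41.truncGE_X_isZero _ _ (hM i (Or.inr (by omega))))
    let KT : CochainComplex A ℤ :=
      (HomologicalComplex.single A (ComplexShape.up ℤ) (a+1)).obj ((M.X a).as)
    have hbKT := Prop41.isBdd_single (C := A) (a+1) ((M.X a).as)
    let KTb : Kb A := ⟨(qA A).obj KT, hbKT⟩
    let Kτb : Kb A := ⟨(qA A).obj Kτ, hbKτ⟩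
    let fM := Prop41.truncSingleHom a M
    let θ₁ : (qS A 𝒳).obj ((mapS A 𝒳).obj KT) ≅
        (qS A 𝒳).obj ((HomologicalComplex.single (StabCat A 𝒳)
          (ComplexShape.up ℤ) (a+1)).obj (M.X a)) :=
      (qS A 𝒳).mapIso ((HomologicalComplex.singleMapHomologicalComplex (stabFunctor A 𝒳)
        (ComplexShape.up ℤ) (a+1)).app ((M.X a).as))
    let w : (qS A 𝒳).obj ((mapS A 𝒳).obj KT) ⟶ (qS A 𝒳).obj ((mapS A 𝒳).obj Kτ) :=
      θ₁.hom ≫ (qS A 𝒳).map fM ≫ ρ.inv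
    let wK : (canKbStab A 𝒳).obj KTb ⟶ (canKbStab A 𝒳).obj Kτb := ObjectProperty.homMk w
    obtain ⟨v, hv⟩ := hfull.map_surjective
      ((e.hom.app KTb ≫ wK ≫ e.inv.app Kτb :
        Φ.obj ((VQ A 𝒳).obj KTb) ⟶ Φ.obj ((VQ A 𝒳).obj Kτb)))
    obtain ⟨K', s0, f0, hWs0, heq0⟩ := fracP_top A 𝒳 v
    let s : K' ⟶ KTb := s0
    let f' : K' ⟶ Kτb := f0
    have hWs : Wstar A 𝒳 s := hWs0
    have heq : (VQ A 𝒳).map s ≫ v = (VQ A 𝒳).map f' := heq0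
    have hkey : (canKbStab A 𝒳).map s ≫ wK = (canKbStab A 𝒳).map f' := by
      have n₁ := e.inv.naturality s
      have n₂ := e.inv.naturality f'
      have hv' : e.inv.app KTb ≫ Φ.map v = wK ≫ e.inv.app Kτb := by
        rw [hv, Iso.inv_hom_id_app_assoc]
      have key : ((canKbStab A 𝒳).map s ≫ wK) ≫ e.inv.app Kτb =
          (canKbStab A 𝒳).map f' ≫ e.inv.app Kτb := by
        have c1 : ((canKbStab A 𝒳).map s ≫ wK) ≫ e.inv.app Kτb =
            ((canKbStab A 𝒳).map s ≫ e.inv.app KTb) ≫ Φ.map v := by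
          rw [Category.assoc, Category.assoc, hv']
        have c2 : ((canKbStab A 𝒳).map s ≫ e.inv.app KTb) ≫ Φ.map v =
            e.inv.app K' ≫ Φ.map ((VQ A 𝒳).map s ≫ v) := by
          rw [n₁, Category.assoc, Functor.comp_map, ← Φ.map_comp]
        rw [c1, c2, heq, ← Functor.comp_map (VQ A 𝒳) Φ, ← n₂]
      exact (cancel_mono (e.inv.app Kτb)).1 key
    have hkeyH : (canH A 𝒳).map s ≫ w = (canH A 𝒳).map f' :=
      congrArg (fun φ => φ.hom) hkey
    -- distinguished triangle on `w` with cone `qS (mappingCone fM)`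
    have hTfM := HomotopyCategory.mappingCone_triangleh_distinguished fM
    let T₂ : Triangle (HtpyStab A 𝒳) := Triangle.mk w
        (ρ.hom ≫ (CochainComplex.mappingCone.triangleh fM).mor₂)
        ((CochainComplex.mappingCone.triangleh fM).mor₃ ≫
          (CategoryTheory.shiftFunctor (HtpyStab A 𝒳) (1 : ℤ)).map θ₁.inv)
    have hT₂ : T₂ ∈ distTriang (HtpyStab A 𝒳) := by
      refine isomorphic_distinguished _ hTfM _ ?_
      refine Triangle.isoMk _ _ θ₁ ρ (Iso.refl _) ?_ ?_ ?_
      · show w ≫ ρ.hom = θ₁.hom ≫ (qS A 𝒳).map fM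
        dsimp only [w]
        rw [Category.assoc, Category.assoc, ρ.inv_hom_id, Category.comp_id]
      · show (ρ.hom ≫ _) ≫ 𝟙 _ = ρ.hom ≫ _
        rw [Category.comp_id]
      · show (_ ≫ _) ≫ _ = 𝟙 _ ≫ _
        exact (Category.assoc _ _ _).trans ((congrArg (_ ≫ ·) ((Functor.map_comp _ _ _).symm.trans
          ((congrArg (CategoryTheory.shiftFunctor (HtpyStab A 𝒳) (1 : ℤ)).map θ₁.inv_hom_id).trans
            (CategoryTheory.Functor.map_id _ _)))).trans ((Category.comp_id _).trans (Category.id_comp _).symm))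
    -- distinguished triangle on `canH.map f'`
    obtain ⟨f₀, hf₀⟩ := (qA A).map_surjective (f'.hom : (qA A).obj K'.obj.as ⟶ (qA A).obj Kτ)
    let Th := CochainComplex.mappingCone.triangleh ((mapS A 𝒳).map f₀)
    have hTf₀ : Th ∈ distTriang (HtpyStab A 𝒳) :=
      HomotopyCategory.mappingCone_triangleh_distinguished ((mapS A 𝒳).map f₀)
    have hcanf : (canH A 𝒳).map f' = (qS A 𝒳).map ((mapS A 𝒳).map f₀) := by
      exact (congrArg (mapH A 𝒳).map hf₀.symm).trans rfl
    have comm₁ : Th.mor₁ ≫ (𝟙 ((qS A 𝒳).obj ((mapS A 𝒳).obj Kτ)) : Th.obj₂ ⟶ T₂.obj₂) =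
        (canH A 𝒳).map s ≫ T₂.mor₁ := by
      show (qS A 𝒳).map ((mapS A 𝒳).map f₀) ≫ 𝟙 ((qS A 𝒳).obj ((mapS A 𝒳).obj Kτ)) =
        (canH A 𝒳).map s ≫ w
      erw [Category.comp_id, hkeyH, hcanf]
    obtain ⟨c, hc₁, hc₂⟩ := complete_distinguished_triangle_morphism Th T₂ hTf₀ hT₂
      ((canH A 𝒳).map s) (𝟙 ((qS A 𝒳).obj ((mapS A 𝒳).obj Kτ)) : Th.obj₂ ⟶ T₂.obj₂) comm₁
    have hciso : IsIso c := by
      have hs₁ : IsIso ((canH A 𝒳).map s) := hWs.isIso_canH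
      have hs₂ : IsIso (𝟙 ((qS A 𝒳).obj ((mapS A 𝒳).obj Kτ)) : Th.obj₂ ⟶ T₂.obj₂) :=
        ⟨𝟙 _, by simp, by simp⟩
      exact isIso₃_of_isIso₁₂
        ({ hom₁ := (canH A 𝒳).map s,
           hom₂ := (𝟙 ((qS A 𝒳).obj ((mapS A 𝒳).obj Kτ)) : Th.obj₂ ⟶ T₂.obj₂), hom₃ := c,
           comm₁ := comm₁, comm₂ := hc₁, comm₃ := hc₂ } : Th ⟶ T₂) hTf₀ hT₂
          hs₁ hs₂
    refine ⟨CochainComplex.mappingCone f₀,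
      Prop41.isBdd_mappingCone f₀ K'.property hbKτ, ⟨?_⟩⟩
    refine (qS A 𝒳).mapIso (CochainComplex.mappingCone.mapHomologicalComplexIso f₀
      (stabFunctor A 𝒳)) ≪≫ (@asIso _ _ _ _ c hciso) ≪≫ ?_
    exact (qS A 𝒳).mapIso (Prop41.truncDecompIso a M (fun i hi => hM i (Or.inl hi)))

end Main

end Prop41

/-- Proposition 4.1(1): if the canonical triangle functor
`Φ : K^b(𝒜)/K^b(𝒳) ⥤ K^b(𝒜/[𝒳])` (characterized by `Φ ∘ Q ≅ can`, where `Q` is the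
Verdier quotient functor and `can : K^b(𝒜) ⥤ K^b(𝒜/[𝒳])` is the canonical functor)
is full, then it is essentially surjective (dense). -/
theorem canonical_functor_essSurj_of_full [IsAdditiveSubcat A 𝒳]
    (Φ : VerdierQuot A 𝒳 ⥤ KbStab A 𝒳)
    (hΦ : Nonempty (VQ A 𝒳 ⋙ Φ ≅ canKbStab A 𝒳))
    (hfull : Φ.Full) :
    Φ.EssSurj := by
  obtain ⟨e⟩ := hΦ
  constructor
  intro M
  obtain ⟨aM, bM, hM⟩ := M.property
  obtain ⟨K, hbK, ⟨ν⟩⟩ := Prop41.main_induction Φ e hfull (bM - aM).toNat aM M.obj.as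
    (fun i hi => hM i (by omega))
  refine ⟨(VQ A 𝒳).obj ⟨(Prop41.qA A).obj K, hbK⟩, ⟨?_⟩⟩
  refine e.app ⟨(Prop41.qA A).obj K, hbK⟩ ≪≫ ?_
  exact (ObjectProperty.ι _).preimageIso
    (ν : (ObjectProperty.ι _).obj ((canKbStab A 𝒳).obj ⟨(Prop41.qA A).obj K, hbK⟩) ≅
      (ObjectProperty.ι _).obj M)
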